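/- Let (b, B, m, μ) be an admissible parameter set. For u ∈ K let DR(u) be the bounded linear operator on H with ⟨DR(u)v, x⟩ = ⟨B*(v),x⟩ + ∫ (⟨ξ,v⟩ e^{−⟨ξ,u⟩} − ⟨χ(ξ),v⟩) ‖ξ‖^{−2} ν_x(dξ) for all x ∈ K, v ∈ H, and let D²R(u)(v,w) be the unique element of H with ⟨D²R(u)(v,w), x⟩ = −∫ ⟨ξ,v⟩ ⟨ξ,w⟩ e^{−⟨ξ,u⟩} ‖ξ‖^{−2} ν_x(dξ) for all x ∈ K. Then for all u, v, w ∈ K the one-sided derivatives of R exist and satisfy D₊R(u)(v) = DR(u)v and D₊²R(u)(v,w) = D²R(u)(v,w). -/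

import Mathlib

open MeasureTheory Filter
open scoped RealInnerProductSpace Topology ENNReal

noncomputable section

def IsSelfDualCone {H : Type*} [NormedAddCommGroup H] [InnerProductSpace ℝ H]
    (K : Set H) : Prop :=
  K = {x : H | ∀ y ∈ K, 0 ≤ ⟪x, y⟫}

def trunc {H : Type*} [NormedAddCommGroup H] [InnerProductSpace ℝ H] (ξ : H) : H :=
  if ‖ξ‖ ≤ 1 then ξ else 0

structure AdmissibleParams (H : Type*) [NormedAddCommGroup H] [InnerProductSpace ℝ H]
    [CompleteSpace H] [MeasurableSpace H] [BorelSpace H] (K : Set H) where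
  b : H
  B : H →L[ℝ] H
  m : Measure H
  ν : H → Measure H
  muVec : Set H → H
  m_support : m ((K \ {0})ᶜ) = 0
  m_sq : IntegrableOn (fun ξ : H => ‖ξ‖ ^ 2) (K \ {0}) m
  m_chi : ∀ h : H, IntegrableOn (fun ξ : H => |⟪trunc ξ, h⟫|) (K \ {0}) m
  m_Im : ∃ Im : H, ∀ h : H, ⟪Im, h⟫ = ∫ ξ in K \ {0}, ⟪trunc ξ, h⟫ ∂m
  b_drift : ∀ v ∈ K, 0 ≤ ⟪b, v⟫ - ∫ ξ in K \ {0}, ⟪trunc ξ, v⟫ ∂m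
  ν_finite : ∀ x ∈ K, IsFiniteMeasure (ν x)
  ν_support : ∀ x ∈ K, ν x ((K \ {0})ᶜ) = 0
  ν_add : ∀ x ∈ K, ∀ y ∈ K, ν (x + y) = ν x + ν y
  ν_smul : ∀ x ∈ K, ∀ c : ℝ, 0 ≤ c → ν (c • x) = ENNReal.ofReal c • ν x
  ν_int : ∀ u ∈ K, ∀ x ∈ K, ⟪u, x⟫ = 0 →
    IntegrableOn (fun ξ : H => ⟪trunc ξ, u⟫ / ‖ξ‖ ^ 2) (K \ {0}) (ν x)
  B_quasi : ∀ u ∈ K, ∀ x ∈ K, ⟪u, x⟫ = 0 →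
    0 ≤ ⟪ContinuousLinearMap.adjoint B u, x⟫
      - ∫ ξ in K \ {0}, ⟪trunc ξ, u⟫ / ‖ξ‖ ^ 2 ∂(ν x)
  muVec_mem : ∀ S : Set H, MeasurableSet S → muVec S ∈ K
  muVec_spec : ∀ S : Set H, MeasurableSet S → ∀ x ∈ K, ⟪muVec S, x⟫ = (ν x S).toReal

section Aux

variable {H : Type*} [NormedAddCommGroup H] [InnerProductSpace ℝ H] {K : Set H}

lemma sdc_inner_nonneg (hK : IsSelfDualCone K) {x y : H} (hx : x ∈ K) (hy : y ∈ K) :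
    0 ≤ ⟪x, y⟫ := by
  rw [hK] at hx; exact hx y hy

lemma sdc_mem (hK : IsSelfDualCone K) {x : H} (h : ∀ y ∈ K, 0 ≤ ⟪x, y⟫) : x ∈ K := by
  rw [hK]; exact h

lemma sdc_add_mem (hK : IsSelfDualCone K) {x y : H} (hx : x ∈ K) (hy : y ∈ K) : x + y ∈ K := by
  refine sdc_mem hK fun z hz => ?_
  rw [inner_add_left]
  exact add_nonneg (sdc_inner_nonneg hK hx hz) (sdc_inner_nonneg hK hy hz)

lemma sdc_smul_mem (hK : IsSelfDualCone K) {x : H} (hx : x ∈ K) {c : ℝ} (hc : 0 ≤ c) :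
    c • x ∈ K := by
  refine sdc_mem hK fun z hz => ?_
  rw [real_inner_smul_left]
  exact mul_nonneg hc (sdc_inner_nonneg hK hx hz)

lemma sdc_isClosed (hK : IsSelfDualCone K) : IsClosed K := by
  rw [hK]
  have : {x : H | ∀ y ∈ K, 0 ≤ ⟪x, y⟫} = ⋂ y ∈ K, {x : H | 0 ≤ ⟪x, y⟫} := by
    ext x; simp [Set.mem_iInter]
  rw [this]
  exact isClosed_biInter fun y _ =>
    isClosed_le continuous_const (continuous_id.inner continuous_const)

lemma sdc_norm_le (hK : IsSelfDualCone K) {a d : H} (h1 : a - d ∈ K) (h2 : a + d ∈ K) :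
    ‖d‖ ≤ ‖a‖ := by
  have h := sdc_inner_nonneg hK h1 h2
  have heq : ⟪a - d, a + d⟫ = ‖a‖ ^ 2 - ‖d‖ ^ 2 := by
    rw [inner_sub_left, inner_add_right, inner_add_right,
      real_inner_self_eq_norm_sq, real_inner_self_eq_norm_sq, real_inner_comm d a]
    ring
  rw [heq, sub_nonneg] at h
  nlinarith [norm_nonneg d, norm_nonneg a]

lemma exp_neg_ge (a : ℝ) : 1 - a ≤ Real.exp (-a) := by
  have := Real.add_one_le_exp (-a); linarith

lemma exp_neg_quad {a : ℝ} (ha : 0 ≤ a) : Real.exp (-a) - 1 + a ≤ a ^ 2 / 2 := by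
  have hder : ∀ x : ℝ, HasDerivAt (fun b : ℝ => b ^ 2 / 2 - b + 1 - Real.exp (-b))
      (x - 1 + Real.exp (-x)) x := by
    intro x
    have h1 : HasDerivAt (fun b : ℝ => b ^ 2 / 2) x x := by
      simpa using (hasDerivAt_pow 2 x).div_const 2
    have h2 : HasDerivAt (fun b : ℝ => Real.exp (-b)) (-Real.exp (-x)) x := by
      simpa using (hasDerivAt_neg x).exp
    have := ((h1.sub (hasDerivAt_id x)).add_const 1).sub h2
    exact this.congr_deriv (by ring)
  have hmono : Monotone (fun b : ℝ => b ^ 2 / 2 - b + 1 - Real.exp (-b)) := by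
    apply monotone_of_deriv_nonneg
    · exact fun x => (hder x).differentiableAt
    · intro x
      rw [(hder x).deriv]
      have := Real.add_one_le_exp (-x); linarith
  have := hmono ha
  simp only [ne_eq, OfNat.ofNat_ne_zero, not_false_eq_true, zero_pow, zero_div, neg_zero,
    Real.exp_zero] at this
  linarith

variable [CompleteSpace H] [MeasurableSpace H] [BorelSpace H]

lemma meas_trunc : Measurable (trunc : H → H) := by
  unfold trunc
  exact Measurable.ite (measurableSet_le measurable_norm measurable_const)
    measurable_id measurable_const

lemma meas_inner_right (v : H) : Measurable fun ξ : H => ⟪ξ, v⟫ :=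
  (continuous_id.inner continuous_const).measurable

lemma meas_trunc_inner (v : H) : Measurable fun ξ : H => ⟪trunc ξ, v⟫ :=
  (meas_inner_right v).comp meas_trunc

lemma meas_expinner (u : H) : Measurable fun ξ : H => Real.exp (-⟪ξ, u⟫) :=
  Real.measurable_exp.comp (meas_inner_right u).neg

lemma meas_normsq : Measurable fun ξ : H => ‖ξ‖ ^ 2 :=
  measurable_norm.pow_const 2

end Aux

set_option maxHeartbeats 1000000 in
/-- The one-sided derivatives of `R` exist on `K` and satisfy
`D₊R(u)(v) = DR(u)v` and `D₊²R(u)(v,w) = D²R(u)(v,w)`. -/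
theorem stmt_13 {H : Type*} [NormedAddCommGroup H] [InnerProductSpace ℝ H] [CompleteSpace H]
    [MeasurableSpace H] [BorelSpace H] (K : Set H)
    (hK : IsSelfDualCone K) (hKgen : ∀ z : H, ∃ x ∈ K, ∃ y ∈ K, z = x - y)
    (p : AdmissibleParams H K)
    (R : H → H)
    (hR : ∀ u ∈ K, ∀ x ∈ K, ⟪R u, x⟫ =
      ⟪ContinuousLinearMap.adjoint p.B u, x⟫
        - ∫ ξ in K \ {0}, (Real.exp (-⟪ξ, u⟫) - 1 + ⟪trunc ξ, u⟫) / ‖ξ‖ ^ 2 ∂(p.ν x))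
    (DR : H → H →L[ℝ] H)
    (hDR : ∀ u ∈ K, ∀ v : H, ∀ x ∈ K, ⟪DR u v, x⟫ =
      ⟪ContinuousLinearMap.adjoint p.B v, x⟫
        + ∫ ξ in K \ {0}, (⟪ξ, v⟫ * Real.exp (-⟪ξ, u⟫) - ⟪trunc ξ, v⟫) / ‖ξ‖ ^ 2 ∂(p.ν x))
    (D2R : H → H → H → H)
    (hD2R : ∀ u ∈ K, ∀ v w : H, ∀ x ∈ K, ⟪D2R u v w, x⟫ =
      -∫ ξ in K \ {0}, (⟪ξ, v⟫ * ⟪ξ, w⟫ * Real.exp (-⟪ξ, u⟫)) / ‖ξ‖ ^ 2 ∂(p.ν x)) :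
    ∀ u ∈ K, ∀ v ∈ K, ∀ w ∈ K,
      -- first one-sided derivative: `D₊R(u)(v) = DR(u)v`
      Filter.Tendsto (fun l : ℝ => l⁻¹ • (R (u + l • v) - R u))
        (𝓝[>] 0) (𝓝 (DR u v)) ∧
      -- second one-sided derivative: `D₊²R(u)(v,w) = D²R(u)(v,w)`
      Filter.Tendsto (fun l : ℝ => l⁻¹ • (DR (u + l • w) v - DR u v))
        (𝓝[>] 0) (𝓝 (D2R u v w)) := by
  intro u hu v hv w hw
  set S : Set H := K \ {0} with hS_def
  have hSm : MeasurableSet S :=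
    (sdc_isClosed hK).measurableSet.diff (measurableSet_singleton 0)
  -- basic facts about a.e. points
  have hae : ∀ x ∈ K, ∀ᵐ ξ ∂((p.ν x).restrict S), ξ ∈ K ∧ ξ ≠ 0 := by
    intro x hx
    filter_upwards [ae_restrict_mem hSm] with ξ hξ
    exact ⟨hξ.1, hξ.2⟩
  -- integrability of the three integrand families
  have hint_R : ∀ u' ∈ K, ∀ x ∈ K, IntegrableOn
      (fun ξ : H => (Real.exp (-⟪ξ, u'⟫) - 1 + ⟪trunc ξ, u'⟫) / ‖ξ‖ ^ 2) S (p.ν x) := by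
    intro u' hu' x hx
    haveI := p.ν_finite x hx
    refine Integrable.mono' (integrable_const (‖u'‖ ^ 2 / 2 + 1))
      ((((meas_expinner u').sub measurable_const).add (meas_trunc_inner u')).div
        meas_normsq).aestronglyMeasurable ?_
    filter_upwards [hae x hx] with ξ hξ
    obtain ⟨hξK, hξ0⟩ := hξ
    have hn : 0 < ‖ξ‖ := norm_pos_iff.mpr hξ0
    have hn2 : (0:ℝ) < ‖ξ‖ ^ 2 := by positivity
    have ha : 0 ≤ ⟪ξ, u'⟫ := sdc_inner_nonneg hK hξK hu'
    have hlb := exp_neg_ge ⟪ξ, u'⟫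
    have hexp1 : Real.exp (-⟪ξ, u'⟫) ≤ 1 := Real.exp_le_one_iff.mpr (by linarith)
    have hexp0 : 0 < Real.exp (-⟪ξ, u'⟫) := Real.exp_pos _
    rw [Real.norm_eq_abs, abs_div, abs_of_pos hn2, div_le_iff₀ hn2]
    by_cases h1 : ‖ξ‖ ≤ 1
    · rw [trunc, if_pos h1]
      have hub := exp_neg_quad ha
      have hcs : ⟪ξ, u'⟫ ≤ ‖ξ‖ * ‖u'‖ := real_inner_le_norm ξ u'
      have habs : |Real.exp (-⟪ξ, u'⟫) - 1 + ⟪ξ, u'⟫| = Real.exp (-⟪ξ, u'⟫) - 1 + ⟪ξ, u'⟫ :=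
        abs_of_nonneg (by linarith)
      rw [habs]
      nlinarith [norm_nonneg u', sq_nonneg (‖ξ‖ * ‖u'‖)]
    · rw [trunc, if_neg h1]
      push_neg at h1
      simp only [inner_zero_left, add_zero]
      have : |Real.exp (-⟪ξ, u'⟫) - 1| ≤ 1 := by
        rw [abs_le]; constructor <;> linarith
      nlinarith [norm_nonneg u', sq_nonneg ‖u'‖]
  have hint_DR : ∀ u' ∈ K, ∀ v' : H, ∀ x ∈ K, IntegrableOn
      (fun ξ : H => (⟪ξ, v'⟫ * Real.exp (-⟪ξ, u'⟫) - ⟪trunc ξ, v'⟫) / ‖ξ‖ ^ 2) S (p.ν x) := by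
    intro u' hu' v' x hx
    haveI := p.ν_finite x hx
    refine Integrable.mono' (integrable_const (‖v'‖ * ‖u'‖ + ‖v'‖))
      ((((meas_inner_right v').mul (meas_expinner u')).sub (meas_trunc_inner v')).div
        meas_normsq).aestronglyMeasurable ?_
    filter_upwards [hae x hx] with ξ hξ
    obtain ⟨hξK, hξ0⟩ := hξ
    have hn : 0 < ‖ξ‖ := norm_pos_iff.mpr hξ0
    have hn2 : (0:ℝ) < ‖ξ‖ ^ 2 := by positivity
    have ha : 0 ≤ ⟪ξ, u'⟫ := sdc_inner_nonneg hK hξK hu'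
    have hlb := exp_neg_ge ⟪ξ, u'⟫
    have hexp1 : Real.exp (-⟪ξ, u'⟫) ≤ 1 := Real.exp_le_one_iff.mpr (by linarith)
    have hexp0 : 0 < Real.exp (-⟪ξ, u'⟫) := Real.exp_pos _
    have hcs : |⟪ξ, v'⟫| ≤ ‖ξ‖ * ‖v'‖ := abs_real_inner_le_norm ξ v'
    have hcsu : ⟪ξ, u'⟫ ≤ ‖ξ‖ * ‖u'‖ := real_inner_le_norm ξ u'
    rw [Real.norm_eq_abs, abs_div, abs_of_pos hn2, div_le_iff₀ hn2]
    by_cases h1 : ‖ξ‖ ≤ 1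
    · rw [trunc, if_pos h1]
      have heq : ⟪ξ, v'⟫ * Real.exp (-⟪ξ, u'⟫) - ⟪ξ, v'⟫
          = ⟪ξ, v'⟫ * (Real.exp (-⟪ξ, u'⟫) - 1) := by ring
      rw [heq, abs_mul]
      have h2 : |Real.exp (-⟪ξ, u'⟫) - 1| ≤ ⟪ξ, u'⟫ := by
        rw [abs_le]; constructor <;> linarith
      have h3 : |⟪ξ, v'⟫| * |Real.exp (-⟪ξ, u'⟫) - 1| ≤ (‖ξ‖ * ‖v'‖) * (‖ξ‖ * ‖u'‖) := by
        apply mul_le_mul hcs (h2.trans hcsu) (abs_nonneg _) (by positivity)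
      nlinarith [norm_nonneg v', norm_nonneg u', abs_nonneg ⟪ξ, v'⟫]
    · rw [trunc, if_neg h1]
      push_neg at h1
      simp only [inner_zero_left, sub_zero]
      rw [abs_mul, abs_of_pos hexp0]
      have h3 : |⟪ξ, v'⟫| * Real.exp (-⟪ξ, u'⟫) ≤ ‖ξ‖ * ‖v'‖ := by
        calc |⟪ξ, v'⟫| * Real.exp (-⟪ξ, u'⟫) ≤ (‖ξ‖ * ‖v'‖) * 1 :=
              mul_le_mul hcs hexp1 hexp0.le (by positivity)
        _ = ‖ξ‖ * ‖v'‖ := mul_one _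
      have hxx : ‖ξ‖ ≤ ‖ξ‖ ^ 2 := by nlinarith
      have h4 : ‖ξ‖ * ‖v'‖ ≤ ‖ξ‖ ^ 2 * ‖v'‖ := mul_le_mul_of_nonneg_right hxx (norm_nonneg v')
      nlinarith [mul_nonneg (mul_nonneg (norm_nonneg v') (norm_nonneg u')) (sq_nonneg ‖ξ‖)]
  have hint_D2 : ∀ u' ∈ K, ∀ v' w' : H, ∀ x ∈ K, IntegrableOn
      (fun ξ : H => (⟪ξ, v'⟫ * ⟪ξ, w'⟫ * Real.exp (-⟪ξ, u'⟫)) / ‖ξ‖ ^ 2) S (p.ν x) := by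
    intro u' hu' v' w' x hx
    haveI := p.ν_finite x hx
    refine Integrable.mono' (integrable_const (‖v'‖ * ‖w'‖))
      ((((meas_inner_right v').mul (meas_inner_right w')).mul (meas_expinner u')).div
        meas_normsq).aestronglyMeasurable ?_
    filter_upwards [hae x hx] with ξ hξ
    obtain ⟨hξK, hξ0⟩ := hξ
    have hn : 0 < ‖ξ‖ := norm_pos_iff.mpr hξ0
    have hn2 : (0:ℝ) < ‖ξ‖ ^ 2 := by positivity
    have ha : 0 ≤ ⟪ξ, u'⟫ := sdc_inner_nonneg hK hξK hu'
    have hexp1 : Real.exp (-⟪ξ, u'⟫) ≤ 1 := Real.exp_le_one_iff.mpr (by linarith)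
    have hexp0 : 0 < Real.exp (-⟪ξ, u'⟫) := Real.exp_pos _
    have hcsv : |⟪ξ, v'⟫| ≤ ‖ξ‖ * ‖v'‖ := abs_real_inner_le_norm ξ v'
    have hcsw : |⟪ξ, w'⟫| ≤ ‖ξ‖ * ‖w'‖ := abs_real_inner_le_norm ξ w'
    rw [Real.norm_eq_abs, abs_div, abs_of_pos hn2, div_le_iff₀ hn2]
    rw [abs_mul, abs_mul, abs_of_pos hexp0]
    have h3 : |⟪ξ, v'⟫| * |⟪ξ, w'⟫| ≤ (‖ξ‖ * ‖v'‖) * (‖ξ‖ * ‖w'‖) :=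
      mul_le_mul hcsv hcsw (abs_nonneg _) (by positivity)
    nlinarith [abs_nonneg ⟪ξ, v'⟫, abs_nonneg ⟪ξ, w'⟫,
      mul_nonneg (abs_nonneg ⟪ξ, v'⟫) (abs_nonneg ⟪ξ, w'⟫)]
  -- key identity for the first derivative
  have key1 : ∀ l : ℝ, 0 < l → ∀ x ∈ K,
      ⟪l⁻¹ • (R (u + l • v) - R u) - DR u v, x⟫
        = ∫ ξ in S, Real.exp (-⟪ξ, u⟫)
            * ((1 - Real.exp (-(l * ⟪ξ, v⟫))) / l - ⟪ξ, v⟫) / ‖ξ‖ ^ 2 ∂(p.ν x) := by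
    intro l hl x hx
    have hl0 : l ≠ 0 := ne_of_gt hl
    have hulv : u + l • v ∈ K := sdc_add_mem hK hu (sdc_smul_mem hK hv hl.le)
    have hBadd : ⟪ContinuousLinearMap.adjoint p.B (u + l • v), x⟫
        = ⟪ContinuousLinearMap.adjoint p.B u, x⟫
          + l * ⟪ContinuousLinearMap.adjoint p.B v, x⟫ := by
      rw [map_add, ContinuousLinearMap.map_smul, inner_add_left, real_inner_smul_left]
    have hinv : l⁻¹ * l = 1 := inv_mul_cancel₀ hl0
    have hI : l⁻¹ * ((∫ ξ in S, (Real.exp (-⟪ξ, u⟫) - 1 + ⟪trunc ξ, u⟫) / ‖ξ‖ ^ 2 ∂(p.ν x))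
          - ∫ ξ in S, (Real.exp (-⟪ξ, u + l • v⟫) - 1 + ⟪trunc ξ, u + l • v⟫) / ‖ξ‖ ^ 2 ∂(p.ν x))
        - ∫ ξ in S, (⟪ξ, v⟫ * Real.exp (-⟪ξ, u⟫) - ⟪trunc ξ, v⟫) / ‖ξ‖ ^ 2 ∂(p.ν x)
        = ∫ ξ in S, Real.exp (-⟪ξ, u⟫)
            * ((1 - Real.exp (-(l * ⟪ξ, v⟫))) / l - ⟪ξ, v⟫) / ‖ξ‖ ^ 2 ∂(p.ν x) := by
      have hfin2 : IntegrableOn (fun ξ : H => l⁻¹ *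
          ((Real.exp (-⟪ξ, u⟫) - 1 + ⟪trunc ξ, u⟫) / ‖ξ‖ ^ 2
            - (Real.exp (-⟪ξ, u + l • v⟫) - 1 + ⟪trunc ξ, u + l • v⟫) / ‖ξ‖ ^ 2)) S (p.ν x) :=
        (Integrable.sub (hint_R u hu x hx) (hint_R (u + l • v) hulv x hx)).const_mul l⁻¹
      have e1 : ∫ ξ in S, l⁻¹ * ((Real.exp (-⟪ξ, u⟫) - 1 + ⟪trunc ξ, u⟫) / ‖ξ‖ ^ 2
            - (Real.exp (-⟪ξ, u + l • v⟫) - 1 + ⟪trunc ξ, u + l • v⟫) / ‖ξ‖ ^ 2) ∂(p.ν x)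
          = l⁻¹ * ((∫ ξ in S, (Real.exp (-⟪ξ, u⟫) - 1 + ⟪trunc ξ, u⟫) / ‖ξ‖ ^ 2 ∂(p.ν x))
            - ∫ ξ in S, (Real.exp (-⟪ξ, u + l • v⟫) - 1 + ⟪trunc ξ, u + l • v⟫) / ‖ξ‖ ^ 2 ∂(p.ν x)) := by
        rw [integral_const_mul, integral_sub (hint_R u hu x hx) (hint_R (u + l • v) hulv x hx)]
      have e2 : ∫ ξ in S, (l⁻¹ * ((Real.exp (-⟪ξ, u⟫) - 1 + ⟪trunc ξ, u⟫) / ‖ξ‖ ^ 2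
            - (Real.exp (-⟪ξ, u + l • v⟫) - 1 + ⟪trunc ξ, u + l • v⟫) / ‖ξ‖ ^ 2)
            - (⟪ξ, v⟫ * Real.exp (-⟪ξ, u⟫) - ⟪trunc ξ, v⟫) / ‖ξ‖ ^ 2) ∂(p.ν x)
          = (∫ ξ in S, l⁻¹ * ((Real.exp (-⟪ξ, u⟫) - 1 + ⟪trunc ξ, u⟫) / ‖ξ‖ ^ 2
            - (Real.exp (-⟪ξ, u + l • v⟫) - 1 + ⟪trunc ξ, u + l • v⟫) / ‖ξ‖ ^ 2) ∂(p.ν x))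
            - ∫ ξ in S, (⟪ξ, v⟫ * Real.exp (-⟪ξ, u⟫) - ⟪trunc ξ, v⟫) / ‖ξ‖ ^ 2 ∂(p.ν x) :=
        integral_sub hfin2 (hint_DR u hu v x hx)
      have hptw : ∫ ξ in S, Real.exp (-⟪ξ, u⟫)
            * ((1 - Real.exp (-(l * ⟪ξ, v⟫))) / l - ⟪ξ, v⟫) / ‖ξ‖ ^ 2 ∂(p.ν x)
          = ∫ ξ in S, (l⁻¹ * ((Real.exp (-⟪ξ, u⟫) - 1 + ⟪trunc ξ, u⟫) / ‖ξ‖ ^ 2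
            - (Real.exp (-⟪ξ, u + l • v⟫) - 1 + ⟪trunc ξ, u + l • v⟫) / ‖ξ‖ ^ 2)
            - (⟪ξ, v⟫ * Real.exp (-⟪ξ, u⟫) - ⟪trunc ξ, v⟫) / ‖ξ‖ ^ 2) ∂(p.ν x) := by
        apply integral_congr_ae
        filter_upwards [hae x hx] with ξ hξ
        obtain ⟨hξK, hξ0⟩ := hξ
        have hn : 0 < ‖ξ‖ := norm_pos_iff.mpr hξ0
        have hn2 : (‖ξ‖:ℝ) ^ 2 ≠ 0 := by positivity
        have hiadd : ⟪ξ, u + l • v⟫ = ⟪ξ, u⟫ + l * ⟪ξ, v⟫ := by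
          rw [inner_add_right, real_inner_smul_right]
        have htadd : ⟪trunc ξ, u + l • v⟫ = ⟪trunc ξ, u⟫ + l * ⟪trunc ξ, v⟫ := by
          rw [inner_add_right, real_inner_smul_right]
        rw [hiadd, htadd, neg_add, Real.exp_add]
        field_simp
        ring
      rw [hptw, e2, e1]
    rw [inner_sub_left, real_inner_smul_left, inner_sub_left,
      hR (u + l • v) hulv x hx, hR u hu x hx, hDR u hu v x hx, hBadd]
    linear_combination hI + ⟪ContinuousLinearMap.adjoint p.B v, x⟫ * hinv
  -- bound for the first derivative difference
  have habs1 : ∀ l : ℝ, 0 < l → ∀ x ∈ K,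
      |⟪l⁻¹ • (R (u + l • v) - R u) - DR u v, x⟫| ≤ l / 2 * ‖v‖ ^ 2 * ((p.ν x) S).toReal := by
    intro l hl x hx
    haveI := p.ν_finite x hx
    rw [key1 l hl x hx]
    have hb := norm_integral_le_of_norm_le_const (μ := (p.ν x).restrict S)
      (C := l / 2 * ‖v‖ ^ 2) (f := fun ξ : H => Real.exp (-⟪ξ, u⟫)
        * ((1 - Real.exp (-(l * ⟪ξ, v⟫))) / l - ⟪ξ, v⟫) / ‖ξ‖ ^ 2) ?_
    · rw [Real.norm_eq_abs] at hb
      rw [measureReal_restrict_apply_univ, measureReal_def] at hb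
      exact hb
    · filter_upwards [hae x hx] with ξ hξ
      obtain ⟨hξK, hξ0⟩ := hξ
      have hn : 0 < ‖ξ‖ := norm_pos_iff.mpr hξ0
      have hn2 : (0:ℝ) < ‖ξ‖ ^ 2 := by positivity
      have ha : 0 ≤ ⟪ξ, u⟫ := sdc_inner_nonneg hK hξK hu
      have ht : 0 ≤ ⟪ξ, v⟫ := sdc_inner_nonneg hK hξK hv
      have hexp1 : Real.exp (-⟪ξ, u⟫) ≤ 1 := Real.exp_le_one_iff.mpr (by linarith)
      have hexp0 : 0 < Real.exp (-⟪ξ, u⟫) := Real.exp_pos _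
      have hlt : 0 ≤ l * ⟪ξ, v⟫ := mul_nonneg hl.le ht
      have hq := exp_neg_quad hlt
      have hg := exp_neg_ge (l * ⟪ξ, v⟫)
      have habsbr : |(1 - Real.exp (-(l * ⟪ξ, v⟫))) / l - ⟪ξ, v⟫| ≤ l * ⟪ξ, v⟫ ^ 2 / 2 := by
        have h1 : (1 - Real.exp (-(l * ⟪ξ, v⟫))) / l - ⟪ξ, v⟫
            = (1 - Real.exp (-(l * ⟪ξ, v⟫)) - l * ⟪ξ, v⟫) / l := by
          field_simp
        rw [h1, abs_div, abs_of_pos hl, div_le_iff₀ hl]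
        have h2 : |1 - Real.exp (-(l * ⟪ξ, v⟫)) - l * ⟪ξ, v⟫|
            = Real.exp (-(l * ⟪ξ, v⟫)) - 1 + l * ⟪ξ, v⟫ := by
          rw [abs_of_nonpos (by linarith)]; ring
        rw [h2]
        nlinarith
      have hcs : ⟪ξ, v⟫ ≤ ‖ξ‖ * ‖v‖ := real_inner_le_norm ξ v
      rw [Real.norm_eq_abs, abs_div, abs_of_pos hn2, div_le_iff₀ hn2, abs_mul,
        abs_of_pos hexp0]
      have h5 : Real.exp (-⟪ξ, u⟫) * |(1 - Real.exp (-(l * ⟪ξ, v⟫))) / l - ⟪ξ, v⟫|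
          ≤ 1 * (l * ⟪ξ, v⟫ ^ 2 / 2) :=
        mul_le_mul hexp1 habsbr (abs_nonneg _) zero_le_one
      have h6 : ⟪ξ, v⟫ ^ 2 ≤ ‖ξ‖ ^ 2 * ‖v‖ ^ 2 := by nlinarith
      nlinarith [mul_nonneg hl.le (sq_nonneg ⟪ξ, v⟫), mul_le_mul_of_nonneg_left h6 hl.le]
  -- norm bound for the first derivative difference
  have hnorm1 : ∀ l : ℝ, 0 < l →
      ‖l⁻¹ • (R (u + l • v) - R u) - DR u v‖ ≤ l / 2 * ‖v‖ ^ 2 * ‖p.muVec S‖ := by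
    intro l hl
    have hC : (0:ℝ) ≤ l / 2 * ‖v‖ ^ 2 := mul_nonneg (by linarith) (sq_nonneg _)
    have h1 : (l / 2 * ‖v‖ ^ 2) • p.muVec S - (l⁻¹ • (R (u + l • v) - R u) - DR u v) ∈ K := by
      refine sdc_mem hK fun x hx => ?_
      rw [inner_sub_left, real_inner_smul_left, p.muVec_spec S hSm x hx]
      have := (abs_le.mp (habs1 l hl x hx)).2
      linarith
    have h2 : (l / 2 * ‖v‖ ^ 2) • p.muVec S + (l⁻¹ • (R (u + l • v) - R u) - DR u v) ∈ K := by
      refine sdc_mem hK fun x hx => ?_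
      rw [inner_add_left, real_inner_smul_left, p.muVec_spec S hSm x hx]
      have := (abs_le.mp (habs1 l hl x hx)).1
      linarith
    have hle := sdc_norm_le hK h1 h2
    calc ‖l⁻¹ • (R (u + l • v) - R u) - DR u v‖ ≤ ‖(l / 2 * ‖v‖ ^ 2) • p.muVec S‖ := hle
      _ = l / 2 * ‖v‖ ^ 2 * ‖p.muVec S‖ := by
          rw [norm_smul, Real.norm_eq_abs, abs_of_nonneg hC]
  have part1 : Filter.Tendsto (fun l : ℝ => l⁻¹ • (R (u + l • v) - R u))
      (𝓝[>] 0) (𝓝 (DR u v)) := by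
    rw [← tendsto_sub_nhds_zero_iff]
    apply squeeze_zero_norm' (a := fun l : ℝ => l / 2 * ‖v‖ ^ 2 * ‖p.muVec S‖)
    · filter_upwards [self_mem_nhdsWithin] with l hl
      exact hnorm1 l hl
    · have hcont : Continuous fun l : ℝ => l / 2 * ‖v‖ ^ 2 * ‖p.muVec S‖ := by
        continuity
      have h0 := hcont.tendsto 0
      simp only [zero_div, zero_mul] at h0
      exact h0.mono_left nhdsWithin_le_nhds
  -- second derivative
  have key2 : ∀ l : ℝ, 0 < l → ∀ x ∈ K,
      ⟪l⁻¹ • (DR (u + l • w) v - DR u v) - D2R u v w, x⟫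
        = ∫ ξ in S, ⟪ξ, v⟫ * Real.exp (-⟪ξ, u⟫)
            * (⟪ξ, w⟫ - (1 - Real.exp (-(l * ⟪ξ, w⟫))) / l) / ‖ξ‖ ^ 2 ∂(p.ν x) := by
    intro l hl x hx
    have hl0 : l ≠ 0 := ne_of_gt hl
    have hulw : u + l • w ∈ K := sdc_add_mem hK hu (sdc_smul_mem hK hw hl.le)
    have hI2 : l⁻¹ * ((∫ ξ in S, (⟪ξ, v⟫ * Real.exp (-⟪ξ, u + l • w⟫) - ⟪trunc ξ, v⟫) / ‖ξ‖ ^ 2 ∂(p.ν x))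
          - ∫ ξ in S, (⟪ξ, v⟫ * Real.exp (-⟪ξ, u⟫) - ⟪trunc ξ, v⟫) / ‖ξ‖ ^ 2 ∂(p.ν x))
        + ∫ ξ in S, (⟪ξ, v⟫ * ⟪ξ, w⟫ * Real.exp (-⟪ξ, u⟫)) / ‖ξ‖ ^ 2 ∂(p.ν x)
        = ∫ ξ in S, ⟪ξ, v⟫ * Real.exp (-⟪ξ, u⟫)
            * (⟪ξ, w⟫ - (1 - Real.exp (-(l * ⟪ξ, w⟫))) / l) / ‖ξ‖ ^ 2 ∂(p.ν x) := by
      have hfin2 : IntegrableOn (fun ξ : H => l⁻¹ *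
          ((⟪ξ, v⟫ * Real.exp (-⟪ξ, u + l • w⟫) - ⟪trunc ξ, v⟫) / ‖ξ‖ ^ 2
            - (⟪ξ, v⟫ * Real.exp (-⟪ξ, u⟫) - ⟪trunc ξ, v⟫) / ‖ξ‖ ^ 2)) S (p.ν x) :=
        (Integrable.sub (hint_DR (u + l • w) hulw v x hx) (hint_DR u hu v x hx)).const_mul l⁻¹
      have e1 : ∫ ξ in S, l⁻¹ * ((⟪ξ, v⟫ * Real.exp (-⟪ξ, u + l • w⟫) - ⟪trunc ξ, v⟫) / ‖ξ‖ ^ 2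
            - (⟪ξ, v⟫ * Real.exp (-⟪ξ, u⟫) - ⟪trunc ξ, v⟫) / ‖ξ‖ ^ 2) ∂(p.ν x)
          = l⁻¹ * ((∫ ξ in S, (⟪ξ, v⟫ * Real.exp (-⟪ξ, u + l • w⟫) - ⟪trunc ξ, v⟫) / ‖ξ‖ ^ 2 ∂(p.ν x))
            - ∫ ξ in S, (⟪ξ, v⟫ * Real.exp (-⟪ξ, u⟫) - ⟪trunc ξ, v⟫) / ‖ξ‖ ^ 2 ∂(p.ν x)) := by
        rw [integral_const_mul, integral_sub (hint_DR (u + l • w) hulw v x hx) (hint_DR u hu v x hx)]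
      have e2 : ∫ ξ in S, (l⁻¹ * ((⟪ξ, v⟫ * Real.exp (-⟪ξ, u + l • w⟫) - ⟪trunc ξ, v⟫) / ‖ξ‖ ^ 2
            - (⟪ξ, v⟫ * Real.exp (-⟪ξ, u⟫) - ⟪trunc ξ, v⟫) / ‖ξ‖ ^ 2)
            + (⟪ξ, v⟫ * ⟪ξ, w⟫ * Real.exp (-⟪ξ, u⟫)) / ‖ξ‖ ^ 2) ∂(p.ν x)
          = (∫ ξ in S, l⁻¹ * ((⟪ξ, v⟫ * Real.exp (-⟪ξ, u + l • w⟫) - ⟪trunc ξ, v⟫) / ‖ξ‖ ^ 2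
            - (⟪ξ, v⟫ * Real.exp (-⟪ξ, u⟫) - ⟪trunc ξ, v⟫) / ‖ξ‖ ^ 2) ∂(p.ν x))
            + ∫ ξ in S, (⟪ξ, v⟫ * ⟪ξ, w⟫ * Real.exp (-⟪ξ, u⟫)) / ‖ξ‖ ^ 2 ∂(p.ν x) :=
        integral_add hfin2 (hint_D2 u hu v w x hx)
      have hptw : ∫ ξ in S, ⟪ξ, v⟫ * Real.exp (-⟪ξ, u⟫)
            * (⟪ξ, w⟫ - (1 - Real.exp (-(l * ⟪ξ, w⟫))) / l) / ‖ξ‖ ^ 2 ∂(p.ν x)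
          = ∫ ξ in S, (l⁻¹ * ((⟪ξ, v⟫ * Real.exp (-⟪ξ, u + l • w⟫) - ⟪trunc ξ, v⟫) / ‖ξ‖ ^ 2
            - (⟪ξ, v⟫ * Real.exp (-⟪ξ, u⟫) - ⟪trunc ξ, v⟫) / ‖ξ‖ ^ 2)
            + (⟪ξ, v⟫ * ⟪ξ, w⟫ * Real.exp (-⟪ξ, u⟫)) / ‖ξ‖ ^ 2) ∂(p.ν x) := by
        apply integral_congr_ae
        filter_upwards [hae x hx] with ξ hξ
        obtain ⟨hξK, hξ0⟩ := hξ
        have hn : 0 < ‖ξ‖ := norm_pos_iff.mpr hξ0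
        have hn2 : (‖ξ‖:ℝ) ^ 2 ≠ 0 := by positivity
        have hiadd : ⟪ξ, u + l • w⟫ = ⟪ξ, u⟫ + l * ⟪ξ, w⟫ := by
          rw [inner_add_right, real_inner_smul_right]
        rw [hiadd, neg_add, Real.exp_add]
        field_simp
        ring
      rw [hptw, e2, e1]
    rw [inner_sub_left, real_inner_smul_left, inner_sub_left,
      hDR (u + l • w) hulw v x hx, hDR u hu v x hx, hD2R u hu v w x hx]
    linear_combination hI2
  -- bounds for the second derivative difference
  have habs2 : ∀ l : ℝ, 0 < l → ∀ n : ℕ, ∀ x ∈ K,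
      0 ≤ ⟪l⁻¹ • (DR (u + l • w) v - DR u v) - D2R u v w, x⟫ ∧
      ⟪l⁻¹ • (DR (u + l • w) v - DR u v) - D2R u v w, x⟫
        ≤ l / 2 * ‖v‖ * ‖w‖ ^ 2 * n * ((p.ν x) S).toReal
          + ‖v‖ * ‖w‖ * ((p.ν x) (S ∩ {ξ : H | (n:ℝ) < ‖ξ‖})).toReal := by
    intro l hl n x hx
    haveI := p.ν_finite x hx
    have hl0 : l ≠ 0 := ne_of_gt hl
    have hTm : MeasurableSet {ξ : H | (n:ℝ) < ‖ξ‖} :=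
      measurableSet_lt measurable_const measurable_norm
    rw [key2 l hl x hx]
    -- pointwise facts
    have hptfacts : ∀ ξ : H, ξ ∈ K → ξ ≠ 0 →
        0 ≤ ⟪ξ, v⟫ * Real.exp (-⟪ξ, u⟫) * (⟪ξ, w⟫ - (1 - Real.exp (-(l * ⟪ξ, w⟫))) / l) / ‖ξ‖ ^ 2 ∧
        ⟪ξ, v⟫ * Real.exp (-⟪ξ, u⟫) * (⟪ξ, w⟫ - (1 - Real.exp (-(l * ⟪ξ, w⟫))) / l) / ‖ξ‖ ^ 2
          ≤ ‖v‖ * ‖w‖ ∧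
        (‖ξ‖ ≤ (n:ℝ) →
          ⟪ξ, v⟫ * Real.exp (-⟪ξ, u⟫) * (⟪ξ, w⟫ - (1 - Real.exp (-(l * ⟪ξ, w⟫))) / l) / ‖ξ‖ ^ 2
            ≤ l / 2 * ‖v‖ * ‖w‖ ^ 2 * n) := by
      intro ξ hξK hξ0
      have hn : 0 < ‖ξ‖ := norm_pos_iff.mpr hξ0
      have hn2 : (0:ℝ) < ‖ξ‖ ^ 2 := by positivity
      have ha : 0 ≤ ⟪ξ, u⟫ := sdc_inner_nonneg hK hξK hu
      have ht : 0 ≤ ⟪ξ, v⟫ := sdc_inner_nonneg hK hξK hv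
      have hs : 0 ≤ ⟪ξ, w⟫ := sdc_inner_nonneg hK hξK hw
      have hexp1 : Real.exp (-⟪ξ, u⟫) ≤ 1 := Real.exp_le_one_iff.mpr (by linarith)
      have hexp0 : 0 < Real.exp (-⟪ξ, u⟫) := Real.exp_pos _
      have hg := exp_neg_ge (l * ⟪ξ, w⟫)
      have hq := exp_neg_quad (mul_nonneg hl.le hs)
      have hbr0 : 0 ≤ ⟪ξ, w⟫ - (1 - Real.exp (-(l * ⟪ξ, w⟫))) / l := by
        rw [sub_nonneg, div_le_iff₀ hl]
        nlinarith
      have hbrs : ⟪ξ, w⟫ - (1 - Real.exp (-(l * ⟪ξ, w⟫))) / l ≤ ⟪ξ, w⟫ := by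
        have h0 : 0 ≤ (1 - Real.exp (-(l * ⟪ξ, w⟫))) / l := by
          apply div_nonneg _ hl.le
          have : Real.exp (-(l * ⟪ξ, w⟫)) ≤ 1 :=
            Real.exp_le_one_iff.mpr (by nlinarith)
          linarith
        linarith
      have hbrq : ⟪ξ, w⟫ - (1 - Real.exp (-(l * ⟪ξ, w⟫))) / l ≤ l * ⟪ξ, w⟫ ^ 2 / 2 := by
        have h1 : ⟪ξ, w⟫ - (1 - Real.exp (-(l * ⟪ξ, w⟫))) / l
            = (l * ⟪ξ, w⟫ - (1 - Real.exp (-(l * ⟪ξ, w⟫)))) / l := by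
          field_simp
        rw [h1, div_le_iff₀ hl]
        nlinarith
      have hcsv : ⟪ξ, v⟫ ≤ ‖ξ‖ * ‖v‖ := real_inner_le_norm ξ v
      have hcsw : ⟪ξ, w⟫ ≤ ‖ξ‖ * ‖w‖ := real_inner_le_norm ξ w
      have hnum0 : 0 ≤ ⟪ξ, v⟫ * Real.exp (-⟪ξ, u⟫)
          * (⟪ξ, w⟫ - (1 - Real.exp (-(l * ⟪ξ, w⟫))) / l) :=
        mul_nonneg (mul_nonneg ht hexp0.le) hbr0
      refine ⟨div_nonneg hnum0 hn2.le, ?_, ?_⟩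
      · rw [div_le_iff₀ hn2]
        have h7 : ⟪ξ, v⟫ * (⟪ξ, w⟫ - (1 - Real.exp (-(l * ⟪ξ, w⟫))) / l)
            ≤ (‖ξ‖ * ‖v‖) * (‖ξ‖ * ‖w‖) :=
          mul_le_mul hcsv (hbrs.trans hcsw) hbr0 (by positivity)
        nlinarith [mul_nonneg ht hbr0]
      · intro hξn
        rw [div_le_iff₀ hn2]
        have h7 : ⟪ξ, v⟫ * (⟪ξ, w⟫ - (1 - Real.exp (-(l * ⟪ξ, w⟫))) / l)
            ≤ (‖ξ‖ * ‖v‖) * (l * ⟪ξ, w⟫ ^ 2 / 2) :=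
          mul_le_mul hcsv hbrq hbr0 (by positivity)
        have hs2 : ⟪ξ, w⟫ ^ 2 ≤ ‖ξ‖ ^ 2 * ‖w‖ ^ 2 := by nlinarith
        have h8 : (‖ξ‖ * ‖v‖) * (l * ⟪ξ, w⟫ ^ 2 / 2)
            ≤ (‖ξ‖ * ‖v‖) * (l * (‖ξ‖ ^ 2 * ‖w‖ ^ 2) / 2) := by
          apply mul_le_mul_of_nonneg_left _ (by positivity)
          have := mul_le_mul_of_nonneg_left hs2 hl.le
          linarith
        have h9 : (‖ξ‖ * ‖v‖) * (l * (‖ξ‖ ^ 2 * ‖w‖ ^ 2) / 2)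
            ≤ l / 2 * ‖v‖ * ‖w‖ ^ 2 * n * ‖ξ‖ ^ 2 := by
          have hxx : ‖ξ‖ * ‖ξ‖ ^ 2 ≤ (n:ℝ) * ‖ξ‖ ^ 2 :=
            mul_le_mul_of_nonneg_right hξn (sq_nonneg _)
          nlinarith [mul_nonneg (mul_nonneg hl.le (norm_nonneg v)) (sq_nonneg ‖w‖),
            mul_nonneg (mul_nonneg (mul_nonneg hl.le (norm_nonneg v)) (sq_nonneg ‖w‖)) hn2.le]
        have h10 : ⟪ξ, v⟫ * Real.exp (-⟪ξ, u⟫) * (⟪ξ, w⟫ - (1 - Real.exp (-(l * ⟪ξ, w⟫))) / l)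
            ≤ ⟪ξ, v⟫ * (⟪ξ, w⟫ - (1 - Real.exp (-(l * ⟪ξ, w⟫))) / l) := by
          nlinarith [mul_nonneg ht hbr0]
        linarith
    constructor
    · apply integral_nonneg_of_ae
      filter_upwards [hae x hx] with ξ hξ
      exact (hptfacts ξ hξ.1 hξ.2).1
    · -- compare with the dominating function
      have hg2meas : Measurable fun ξ : H => ⟪ξ, v⟫ * Real.exp (-⟪ξ, u⟫)
          * (⟪ξ, w⟫ - (1 - Real.exp (-(l * ⟪ξ, w⟫))) / l) / ‖ξ‖ ^ 2 := by
        apply Measurable.div _ meas_normsq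
        apply Measurable.mul ((meas_inner_right v).mul (meas_expinner u))
        apply Measurable.sub (meas_inner_right w)
        apply Measurable.div_const
        apply Measurable.sub measurable_const
        exact Real.measurable_exp.comp ((meas_inner_right w).const_mul l).neg
      have hg2int : IntegrableOn (fun ξ : H => ⟪ξ, v⟫ * Real.exp (-⟪ξ, u⟫)
          * (⟪ξ, w⟫ - (1 - Real.exp (-(l * ⟪ξ, w⟫))) / l) / ‖ξ‖ ^ 2) S (p.ν x) := by
        refine Integrable.mono' (integrable_const (‖v‖ * ‖w‖))
          hg2meas.aestronglyMeasurable ?_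
        filter_upwards [hae x hx] with ξ hξ
        obtain ⟨h0, h1, _⟩ := hptfacts ξ hξ.1 hξ.2
        rw [Real.norm_eq_abs, abs_of_nonneg h0]
        exact h1
      have hφint : IntegrableOn (fun ξ : H => l / 2 * ‖v‖ * ‖w‖ ^ 2 * n
          + Set.indicator {ξ : H | (n:ℝ) < ‖ξ‖} (fun _ => ‖v‖ * ‖w‖) ξ) S (p.ν x) :=
        (integrable_const _).add ((integrable_const (‖v‖ * ‖w‖)).indicator hTm)
      have hle : (∫ ξ in S, ⟪ξ, v⟫ * Real.exp (-⟪ξ, u⟫)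
            * (⟪ξ, w⟫ - (1 - Real.exp (-(l * ⟪ξ, w⟫))) / l) / ‖ξ‖ ^ 2 ∂(p.ν x))
          ≤ ∫ ξ in S, (l / 2 * ‖v‖ * ‖w‖ ^ 2 * n
            + Set.indicator {ξ : H | (n:ℝ) < ‖ξ‖} (fun _ => ‖v‖ * ‖w‖) ξ) ∂(p.ν x) := by
        apply integral_mono_ae hg2int hφint
        filter_upwards [hae x hx] with ξ hξ
        obtain ⟨h0, h1, h2⟩ := hptfacts ξ hξ.1 hξ.2
        by_cases hξn : (n:ℝ) < ‖ξ‖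
        · rw [Set.indicator_of_mem (show ξ ∈ {ξ : H | (n:ℝ) < ‖ξ‖} from hξn)]
          have hC1 : (0:ℝ) ≤ l / 2 * ‖v‖ * ‖w‖ ^ 2 * n :=
            mul_nonneg (mul_nonneg (mul_nonneg (by linarith) (norm_nonneg v))
              (sq_nonneg _)) (Nat.cast_nonneg n)
          linarith
        · rw [Set.indicator_of_notMem (show ξ ∉ {ξ : H | (n:ℝ) < ‖ξ‖} from hξn)]
          push_neg at hξn
          have := h2 hξn
          have hvw : (0:ℝ) ≤ ‖v‖ * ‖w‖ := mul_nonneg (norm_nonneg v) (norm_nonneg w)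
          linarith
      have hφval : (∫ ξ in S, (l / 2 * ‖v‖ * ‖w‖ ^ 2 * n
            + Set.indicator {ξ : H | (n:ℝ) < ‖ξ‖} (fun _ => ‖v‖ * ‖w‖) ξ) ∂(p.ν x))
          = l / 2 * ‖v‖ * ‖w‖ ^ 2 * n * ((p.ν x) S).toReal
            + ‖v‖ * ‖w‖ * ((p.ν x) (S ∩ {ξ : H | (n:ℝ) < ‖ξ‖})).toReal := by
        rw [integral_add (integrable_const _) ((integrable_const (‖v‖ * ‖w‖)).indicator hTm)]
        rw [integral_indicator hTm]
        rw [setIntegral_const, setIntegral_const]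
        rw [measureReal_restrict_apply hTm, Set.inter_comm, measureReal_def, measureReal_def]
        rw [smul_eq_mul, smul_eq_mul]
        ring
      rw [hφval] at hle
      exact hle
  -- norm bound for the second derivative difference
  have hSnm : ∀ n : ℕ, MeasurableSet (S ∩ {ξ : H | (n:ℝ) < ‖ξ‖}) := fun n =>
    hSm.inter (measurableSet_lt measurable_const measurable_norm)
  have hnorm2 : ∀ l : ℝ, 0 < l → ∀ n : ℕ,
      ‖l⁻¹ • (DR (u + l • w) v - DR u v) - D2R u v w‖
        ≤ l / 2 * ‖v‖ * ‖w‖ ^ 2 * n * ‖p.muVec S‖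
          + ‖v‖ * ‖w‖ * ‖p.muVec (S ∩ {ξ : H | (n:ℝ) < ‖ξ‖})‖ := by
    intro l hl n
    have hC1 : (0:ℝ) ≤ l / 2 * ‖v‖ * ‖w‖ ^ 2 * n :=
      mul_nonneg (mul_nonneg (mul_nonneg (by linarith) (norm_nonneg v)) (sq_nonneg _))
        (Nat.cast_nonneg n)
    have hC2 : (0:ℝ) ≤ ‖v‖ * ‖w‖ := mul_nonneg (norm_nonneg v) (norm_nonneg w)
    set a2 := (l / 2 * ‖v‖ * ‖w‖ ^ 2 * (n:ℝ)) • p.muVec S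
      + (‖v‖ * ‖w‖) • p.muVec (S ∩ {ξ : H | (n:ℝ) < ‖ξ‖}) with ha2def
    have ha2inner : ∀ x ∈ K, ⟪a2, x⟫ = l / 2 * ‖v‖ * ‖w‖ ^ 2 * n * ((p.ν x) S).toReal
        + ‖v‖ * ‖w‖ * ((p.ν x) (S ∩ {ξ : H | (n:ℝ) < ‖ξ‖})).toReal := by
      intro x hx
      rw [ha2def, inner_add_left, real_inner_smul_left, real_inner_smul_left,
        p.muVec_spec S hSm x hx, p.muVec_spec _ (hSnm n) x hx]
    have h1 : a2 - (l⁻¹ • (DR (u + l • w) v - DR u v) - D2R u v w) ∈ K := by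
      refine sdc_mem hK fun x hx => ?_
      rw [inner_sub_left, ha2inner x hx]
      have := (habs2 l hl n x hx).2
      linarith
    have h2 : a2 + (l⁻¹ • (DR (u + l • w) v - DR u v) - D2R u v w) ∈ K := by
      refine sdc_mem hK fun x hx => ?_
      rw [inner_add_left, ha2inner x hx]
      have h0 := (habs2 l hl n x hx).1
      have ht1 : (0:ℝ) ≤ l / 2 * ‖v‖ * ‖w‖ ^ 2 * n * ((p.ν x) S).toReal :=
        mul_nonneg hC1 ENNReal.toReal_nonneg
      have ht2 : (0:ℝ) ≤ ‖v‖ * ‖w‖ * ((p.ν x) (S ∩ {ξ : H | (n:ℝ) < ‖ξ‖})).toReal :=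
        mul_nonneg hC2 ENNReal.toReal_nonneg
      linarith
    have hle := sdc_norm_le hK h1 h2
    calc ‖l⁻¹ • (DR (u + l • w) v - DR u v) - D2R u v w‖ ≤ ‖a2‖ := hle
      _ ≤ ‖(l / 2 * ‖v‖ * ‖w‖ ^ 2 * (n:ℝ)) • p.muVec S‖
          + ‖(‖v‖ * ‖w‖) • p.muVec (S ∩ {ξ : H | (n:ℝ) < ‖ξ‖})‖ := norm_add_le _ _
      _ = l / 2 * ‖v‖ * ‖w‖ ^ 2 * n * ‖p.muVec S‖
          + ‖v‖ * ‖w‖ * ‖p.muVec (S ∩ {ξ : H | (n:ℝ) < ‖ξ‖})‖ := by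
          rw [norm_smul, norm_smul, Real.norm_eq_abs, Real.norm_eq_abs,
            abs_of_nonneg hC1, abs_of_nonneg hC2]
  -- tail of the vector measure tends to zero
  have htail : ∀ ε : ℝ, 0 < ε → ∃ n : ℕ,
      ‖v‖ * ‖w‖ * ‖p.muVec (S ∩ {ξ : H | (n:ℝ) < ‖ξ‖})‖ < ε := by
    intro ε hε
    set c := p.muVec S with hcdef
    have hcK : c ∈ K := p.muVec_mem S hSm
    haveI := p.ν_finite c hcK
    set δ : ℝ := ε / (‖v‖ * ‖w‖ + 1) with hδdef
    have hvw : (0:ℝ) ≤ ‖v‖ * ‖w‖ := mul_nonneg (norm_nonneg v) (norm_nonneg w)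
    have hδpos : 0 < δ := by
      rw [hδdef]; positivity
    have hδmul : δ * (‖v‖ * ‖w‖ + 1) = ε := by
      rw [hδdef]; field_simp
    -- measures of the tails tend to zero
    have hanti : Antitone fun n : ℕ => S ∩ {ξ : H | (n:ℝ) < ‖ξ‖} := by
      intro m k hmk
      apply Set.inter_subset_inter_right
      intro ξ hξ
      simp only [Set.mem_setOf_eq] at hξ ⊢
      have : (m:ℝ) ≤ k := Nat.cast_le.mpr hmk
      linarith
    have hempty : ⋂ n : ℕ, (S ∩ {ξ : H | (n:ℝ) < ‖ξ‖}) = ∅ := by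
      ext ξ
      simp only [Set.mem_iInter, Set.mem_inter_iff, Set.mem_setOf_eq,
        Set.mem_empty_iff_false, iff_false, not_forall]
      obtain ⟨n, hn⟩ := exists_nat_gt ‖ξ‖
      exact ⟨n, fun h => absurd h.2 (not_lt.mpr hn.le)⟩
    have htend : Tendsto (fun n : ℕ => p.ν c (S ∩ {ξ : H | (n:ℝ) < ‖ξ‖})) atTop (𝓝 0) := by
      have := tendsto_measure_iInter_atTop (μ := p.ν c)
        (fun n => (hSnm n).nullMeasurableSet) hanti ⟨0, measure_ne_top _ _⟩
      rwa [hempty, measure_empty] at this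
    have htr : Tendsto (fun n : ℕ => (p.ν c (S ∩ {ξ : H | (n:ℝ) < ‖ξ‖})).toReal)
        atTop (𝓝 0) := by
      have h := (ENNReal.tendsto_toReal (by simp : (0:ℝ≥0∞) ≠ ⊤)).comp htend
      simpa [Function.comp_def] using h
    obtain ⟨n, hn⟩ := (htr.eventually (gt_mem_nhds (show (0:ℝ) < δ ^ 2 by positivity))).exists
    refine ⟨n, ?_⟩
    have hmn : p.muVec (S ∩ {ξ : H | (n:ℝ) < ‖ξ‖}) ∈ K := p.muVec_mem _ (hSnm n)
    have hdiff : c - p.muVec (S ∩ {ξ : H | (n:ℝ) < ‖ξ‖}) ∈ K := by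
      refine sdc_mem hK fun x hx => ?_
      haveI := p.ν_finite x hx
      rw [inner_sub_left, hcdef, p.muVec_spec S hSm x hx, p.muVec_spec _ (hSnm n) x hx]
      rw [sub_nonneg]
      exact ENNReal.toReal_mono (measure_ne_top _ _) (measure_mono Set.inter_subset_left)
    have hip := sdc_inner_nonneg hK hmn hdiff
    rw [inner_sub_right] at hip
    have heq : ⟪p.muVec (S ∩ {ξ : H | (n:ℝ) < ‖ξ‖}), c⟫
        = (p.ν c (S ∩ {ξ : H | (n:ℝ) < ‖ξ‖})).toReal := p.muVec_spec _ (hSnm n) c hcK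
    have hsq : ‖p.muVec (S ∩ {ξ : H | (n:ℝ) < ‖ξ‖})‖ ^ 2
        ≤ (p.ν c (S ∩ {ξ : H | (n:ℝ) < ‖ξ‖})).toReal := by
      rw [← heq]
      have hself : ⟪p.muVec (S ∩ {ξ : H | (n:ℝ) < ‖ξ‖}),
          p.muVec (S ∩ {ξ : H | (n:ℝ) < ‖ξ‖})⟫
          = ‖p.muVec (S ∩ {ξ : H | (n:ℝ) < ‖ξ‖})‖ ^ 2 := real_inner_self_eq_norm_sq _
      linarith
    have hlt : ‖p.muVec (S ∩ {ξ : H | (n:ℝ) < ‖ξ‖})‖ < δ := by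
      nlinarith [norm_nonneg (p.muVec (S ∩ {ξ : H | (n:ℝ) < ‖ξ‖}))]
    have hfin : ‖v‖ * ‖w‖ * ‖p.muVec (S ∩ {ξ : H | (n:ℝ) < ‖ξ‖})‖ ≤ ‖v‖ * ‖w‖ * δ :=
      mul_le_mul_of_nonneg_left hlt.le hvw
    have : ‖v‖ * ‖w‖ * δ < ε := by nlinarith
    linarith
  -- conclusion for the second derivative
  have part2 : Filter.Tendsto (fun l : ℝ => l⁻¹ • (DR (u + l • w) v - DR u v))
      (𝓝[>] 0) (𝓝 (D2R u v w)) := by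
    rw [← tendsto_sub_nhds_zero_iff]
    rw [NormedAddCommGroup.tendsto_nhds_zero]
    intro ε hε
    obtain ⟨n, hn⟩ := htail (ε / 2) (by linarith)
    set C0 : ℝ := 1 / 2 * ‖v‖ * ‖w‖ ^ 2 * n * ‖p.muVec S‖ with hC0def
    have hC0 : 0 ≤ C0 := by
      rw [hC0def]; positivity
    set δ' : ℝ := ε / 2 / (C0 + 1) with hδ'def
    have hδ'pos : 0 < δ' := by rw [hδ'def]; positivity
    have hδ'mul : δ' * (C0 + 1) = ε / 2 := by rw [hδ'def]; field_simp
    filter_upwards [Ioo_mem_nhdsGT hδ'pos] with l hl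
    obtain ⟨hl0, hlδ⟩ := hl
    have hb := hnorm2 l hl0 n
    have hfirst : l / 2 * ‖v‖ * ‖w‖ ^ 2 * n * ‖p.muVec S‖ = l * C0 := by
      rw [hC0def]; ring
    rw [hfirst] at hb
    have hlC0 : l * C0 ≤ δ' * C0 := mul_le_mul_of_nonneg_right hlδ.le hC0
    have : δ' * C0 < ε / 2 := by nlinarith
    calc ‖l⁻¹ • (DR (u + l • w) v - DR u v) - D2R u v w‖
        ≤ l * C0 + ‖v‖ * ‖w‖ * ‖p.muVec (S ∩ {ξ : H | (n:ℝ) < ‖ξ‖})‖ := hb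
      _ < ε / 2 + ε / 2 := by linarith
      _ = ε := by ring
  exact ⟨part1, part2⟩
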